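/- Let f: R^{n_x} × R^{n_u} → R and g: R^{n_x} × R^{n_u} → R^{n_x} be twice continuously differentiable, x(u) a twice differentiable implicit solution of g(x(u),u)=0 with ∇_x g invertible, and λ(u) defined by (∇_x g)ᵀ λ = −(∂_x f)ᵀ evaluated at (x(u),u). Define the Lagrangian ℓ(x,u,λ) = f(x,u) + λᵀ g(x,u). Then for any vector w ∈ R^{n_u}, the Hessian-vector product of the reduced function F(u) = f(x(u),u) satisfies (∇² F) w = (∇²_{uu} ℓ) w + (∇²_{ux} ℓ)ᵀ z + (∇_u g)ᵀ ψ, where z solves (∇_x g) z = −(∇_u g) w and ψ solves (∇_x g)ᵀ ψ = −(∇²_{xu} ℓ) w − (∇²_{xx} ℓ) z, all derivatives evaluated at (x(u), u, λ(u)). -/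

import Mathlib

open Matrix

noncomputable def mCLM {m n : ℕ} (A : Matrix (Fin m) (Fin n) ℝ) :
    (Fin n → ℝ) →L[ℝ] (Fin m → ℝ) :=
  LinearMap.toContinuousLinearMap A.mulVecLin

noncomputable def dCLM {n : ℕ} (a : Fin n → ℝ) : (Fin n → ℝ) →L[ℝ] ℝ :=
  (ContinuousLinearMap.proj (0 : Fin 1)).comp (mCLM (Matrix.of fun _ : Fin 1 => a))

lemma mCLM_apply {m n : ℕ} (A : Matrix (Fin m) (Fin n) ℝ) (v : Fin n → ℝ) :
    mCLM A v = A *ᵥ v := rfl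

lemma dCLM_apply {n : ℕ} (a v : Fin n → ℝ) : dCLM a v = a ⬝ᵥ v := rfl

lemma dCLM_single {n : ℕ} (a : Fin n → ℝ) (i : Fin n) :
    dCLM a (Pi.single i 1) = a i := by
  rw [dCLM_apply, dotProduct_single, mul_one]

/-- the continuous linear map sending a pair of vectors `(a,b)` to the functional
`(v,w) ↦ a ⬝ᵥ v + b ⬝ᵥ w`. -/
noncomputable def pairDotCLM {m n : ℕ} :
    ((Fin m → ℝ) × (Fin n → ℝ)) →L[ℝ] (((Fin m → ℝ) × (Fin n → ℝ)) →L[ℝ] ℝ) :=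
  LinearMap.toContinuousLinearMap
  { toFun := fun a => (dCLM a.1).comp (ContinuousLinearMap.fst ℝ _ _)
      + (dCLM a.2).comp (ContinuousLinearMap.snd ℝ _ _)
    map_add' := fun a b => ContinuousLinearMap.ext fun q => by
      simp [dCLM_apply, add_dotProduct]; try ring
    map_smul' := fun r a => ContinuousLinearMap.ext fun q => by
      simp [dCLM_apply, smul_dotProduct]; try ring }

lemma pairDotCLM_apply {m n : ℕ} (a v : (Fin m → ℝ) × (Fin n → ℝ)) :
    pairDotCLM a v = a.1 ⬝ᵥ v.1 + a.2 ⬝ᵥ v.2 := rfl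

/-- product rule for `u ↦ M u *ᵥ v u` when `v u₀ = 0`. -/
lemma hasFDerivAt_mulVec_vanish {k m n : ℕ}
    {M : (Fin k → ℝ) → Matrix (Fin m) (Fin n) ℝ}
    {v : (Fin k → ℝ) → (Fin n → ℝ)} {v' : (Fin k → ℝ) →L[ℝ] (Fin n → ℝ)}
    {u₀ : Fin k → ℝ}
    (hM : ∀ i j, DifferentiableAt ℝ (fun u => M u i j) u₀)
    (hv : HasFDerivAt v v' u₀) (h0 : v u₀ = 0) :
    HasFDerivAt (fun u => M u *ᵥ v u) ((mCLM (M u₀)).comp v') u₀ := by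
  rw [hasFDerivAt_pi']
  intro i
  have hder : HasFDerivAt (fun u => ∑ j, M u i j * v u j)
      (∑ j, ((M u₀ i j) • ((ContinuousLinearMap.proj j).comp v')
        + (v u₀ j) • fderiv ℝ (fun u => M u i j) u₀)) u₀ := by
    refine HasFDerivAt.fun_sum fun j _ => HasFDerivAt.mul (hM i j).hasFDerivAt ?_
    exact (ContinuousLinearMap.proj j).hasFDerivAt.comp u₀ hv
  have heq : (fun u => (M u *ᵥ v u) i) = fun u => ∑ j, M u i j * v u j := rfl
  rw [heq]
  refine hder.congr_fderiv ?_
  ext b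
  simp [mCLM_apply, mulVec, dotProduct, h0]

/-- **Adjoint-adjoint method for reduced Hessian-vector products.**
With the Lagrangian `ℓ(x,u,λ) = f(x,u) + λᵀ g(x,u)` (whose gradients w.r.t. `x`
and `u` at the fixed adjoint `λ(u₀)` are `∂ₓf + λᵀ∇ₓg` and `∂ᵤf + λᵀ∇ᵤg`), the
reduced Hessian of `F u = f (x u) u` satisfies
`(∇²F) w = (∇²ᵤᵤℓ) w + (∇²ᵤₓℓ)ᵀ z + (∇ᵤg)ᵀ ψ`, where `z, ψ` solve the two
second-order adjoint linear systems. -/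
theorem reduced_hessian_adjoint_adjoint
    {nx nu : ℕ}
    (f : (Fin nx → ℝ) → (Fin nu → ℝ) → ℝ)
    (g : (Fin nx → ℝ) → (Fin nu → ℝ) → (Fin nx → ℝ))
    (x : (Fin nu → ℝ) → (Fin nx → ℝ)) (u₀ : Fin nu → ℝ)
    (hf : ContDiff ℝ 2 (fun p : (Fin nx → ℝ) × (Fin nu → ℝ) => f p.1 p.2))
    (hg : ContDiff ℝ 2 (fun p : (Fin nx → ℝ) × (Fin nu → ℝ) => g p.1 p.2))
    (hx : ContDiffAt ℝ 2 x u₀)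
    (hsol : ∀ᶠ u in nhds u₀, g (x u) u = 0)
    -- pointwise partial gradients of `f` and Jacobians of `g`
    (gradfx : (Fin nx → ℝ) → (Fin nu → ℝ) → (Fin nx → ℝ))
    (gradfu : (Fin nx → ℝ) → (Fin nu → ℝ) → (Fin nu → ℝ))
    (Jgx : (Fin nx → ℝ) → (Fin nu → ℝ) → Matrix (Fin nx) (Fin nx) ℝ)
    (Jgu : (Fin nx → ℝ) → (Fin nu → ℝ) → Matrix (Fin nx) (Fin nu) ℝ)
    (hfx : ∀ x' u', HasFDerivAt (fun ξ => f ξ u') (dCLM (gradfx x' u')) x')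
    (hfu : ∀ x' u', HasFDerivAt (fun υ => f x' υ) (dCLM (gradfu x' u')) u')
    (hgx : ∀ x' u', HasFDerivAt (fun ξ => g ξ u') (mCLM (Jgx x' u')) x')
    (hgu : ∀ x' u', HasFDerivAt (fun υ => g x' υ) (mCLM (Jgu x' u')) u')
    (hinv : IsUnit (Jgx (x u₀) u₀).det)
    -- the first-order adjoint `λ(u)`, solving `(∇ₓg)ᵀ λ = −(∂ₓf)ᵀ` along the path
    (lam : (Fin nu → ℝ) → (Fin nx → ℝ))
    (hlamdiff : DifferentiableAt ℝ lam u₀)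
    (hlam : ∀ᶠ u in nhds u₀, (Jgx (x u) u)ᵀ *ᵥ lam u = -(gradfx (x u) u))
    -- Hessian blocks of the Lagrangian `ℓ(·,·,λ(u₀))` at `(x u₀, u₀)`
    (Lxx : Matrix (Fin nx) (Fin nx) ℝ) (Lxu : Matrix (Fin nx) (Fin nu) ℝ)
    (Luu : Matrix (Fin nu) (Fin nu) ℝ)
    (hLxx : HasFDerivAt
      (fun ξ => gradfx ξ u₀ + (Jgx ξ u₀)ᵀ *ᵥ lam u₀) (mCLM Lxx) (x u₀))
    (hLxu : HasFDerivAt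
      (fun υ => gradfx (x u₀) υ + (Jgx (x u₀) υ)ᵀ *ᵥ lam u₀) (mCLM Lxu) u₀)
    (hLuu : HasFDerivAt
      (fun υ => gradfu (x u₀) υ + (Jgu (x u₀) υ)ᵀ *ᵥ lam u₀) (mCLM Luu) u₀)
    -- gradient and Hessian of the reduced objective `F u = f (x u) u`
    (gradF : (Fin nu → ℝ) → (Fin nu → ℝ)) (HessF : Matrix (Fin nu) (Fin nu) ℝ)
    (hgradF : ∀ᶠ u in nhds u₀, HasFDerivAt (fun u' => f (x u') u') (dCLM (gradF u)) u)
    (hHessF : HasFDerivAt gradF (mCLM HessF) u₀)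
    -- the second-order adjoints `z, ψ` and the direction `w`
    (w : Fin nu → ℝ) (z ψ : Fin nx → ℝ)
    (hz : Jgx (x u₀) u₀ *ᵥ z = -(Jgu (x u₀) u₀ *ᵥ w))
    (hψ : (Jgx (x u₀) u₀)ᵀ *ᵥ ψ = -(Lxu *ᵥ w) - Lxx *ᵥ z) :
    HessF *ᵥ w = Luu *ᵥ w + Lxuᵀ *ᵥ z + (Jgu (x u₀) u₀)ᵀ *ᵥ ψ := by
  classical
  have hfd : Differentiable ℝ (fun p : (Fin nx → ℝ) × (Fin nu → ℝ) => f p.1 p.2) :=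
    hf.differentiable two_ne_zero
  have hgd : Differentiable ℝ (fun p : (Fin nx → ℝ) × (Fin nu → ℝ) => g p.1 p.2) :=
    hg.differentiable two_ne_zero
  set Df := fderiv ℝ (fun p : (Fin nx → ℝ) × (Fin nu → ℝ) => f p.1 p.2) with hDfdef
  set Dg := fderiv ℝ (fun p : (Fin nx → ℝ) × (Fin nu → ℝ) => g p.1 p.2) with hDgdef
  have hDf : Differentiable ℝ Df :=
    (hf.fderiv_right (m := 1) (by norm_num)).differentiable one_ne_zero
  have hDg : Differentiable ℝ Dg :=
    (hg.fderiv_right (m := 1) (by norm_num)).differentiable one_ne_zero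
  -- decomposition of the joint derivatives into the given partial derivatives
  have hDf_apply : ∀ (x' : Fin nx → ℝ) (u' : Fin nu → ℝ) (a : Fin nx → ℝ) (b : Fin nu → ℝ),
      Df (x', u') (a, b) = gradfx x' u' ⬝ᵥ a + gradfu x' u' ⬝ᵥ b := by
    intro x' u' a b
    have h1 : HasFDerivAt (fun ξ => f ξ u')
        ((Df (x', u')).comp (ContinuousLinearMap.inl ℝ _ _)) x' :=
      ((hfd (x', u')).hasFDerivAt.comp x' (hasFDerivAt_prodMk_left (𝕜 := ℝ) x' u') :)
    have h2 : HasFDerivAt (fun υ => f x' υ)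
        ((Df (x', u')).comp (ContinuousLinearMap.inr ℝ _ _)) u' :=
      (hfd (x', u')).hasFDerivAt.comp u' (hasFDerivAt_prodMk_right x' u')
    have e1 := h1.unique (hfx x' u')
    have e2 := h2.unique (hfu x' u')
    have hsplit : ((a, b) : (Fin nx → ℝ) × (Fin nu → ℝ))
        = ((a, 0) : (Fin nx → ℝ) × (Fin nu → ℝ)) + ((0, b) : (Fin nx → ℝ) × (Fin nu → ℝ)) := by
      simp
    rw [hsplit, map_add]
    have c1 := congrArg (fun L : (Fin nx → ℝ) →L[ℝ] ℝ => L a) e1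
    have c2 := congrArg (fun L : (Fin nu → ℝ) →L[ℝ] ℝ => L b) e2
    simp only [ContinuousLinearMap.comp_apply, ContinuousLinearMap.inl_apply,
      ContinuousLinearMap.inr_apply, dCLM_apply] at c1 c2
    rw [c1, c2]
  have hDg_apply : ∀ (x' : Fin nx → ℝ) (u' : Fin nu → ℝ) (a : Fin nx → ℝ) (b : Fin nu → ℝ),
      Dg (x', u') (a, b) = Jgx x' u' *ᵥ a + Jgu x' u' *ᵥ b := by
    intro x' u' a b
    have h1 : HasFDerivAt (fun ξ => g ξ u')
        ((Dg (x', u')).comp (ContinuousLinearMap.inl ℝ _ _)) x' :=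
      ((hgd (x', u')).hasFDerivAt.comp x' (hasFDerivAt_prodMk_left (𝕜 := ℝ) x' u') :)
    have h2 : HasFDerivAt (fun υ => g x' υ)
        ((Dg (x', u')).comp (ContinuousLinearMap.inr ℝ _ _)) u' :=
      (hgd (x', u')).hasFDerivAt.comp u' (hasFDerivAt_prodMk_right x' u')
    have e1 := h1.unique (hgx x' u')
    have e2 := h2.unique (hgu x' u')
    have hsplit : ((a, b) : (Fin nx → ℝ) × (Fin nu → ℝ))
        = ((a, 0) : (Fin nx → ℝ) × (Fin nu → ℝ)) + ((0, b) : (Fin nx → ℝ) × (Fin nu → ℝ)) := by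
      simp
    rw [hsplit, map_add]
    have c1 := congrArg (fun L : (Fin nx → ℝ) →L[ℝ] (Fin nx → ℝ) => L a) e1
    have c2 := congrArg (fun L : (Fin nu → ℝ) →L[ℝ] (Fin nx → ℝ) => L b) e2
    simp only [ContinuousLinearMap.comp_apply, ContinuousLinearMap.inl_apply,
      ContinuousLinearMap.inr_apply, mCLM_apply] at c1 c2
    rw [c1, c2]
  -- differentiability of the gradient of the Lagrangian in both variables
  have hG1eq : (fun p : (Fin nx → ℝ) × (Fin nu → ℝ) =>
        gradfx p.1 p.2 + (Jgx p.1 p.2)ᵀ *ᵥ lam u₀)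
      = fun p i => Df p (Pi.single i 1, 0) + ∑ j, Dg p (Pi.single i 1, 0) j * lam u₀ j := by
    funext p i
    have e1 : Df p (Pi.single i 1, 0) = gradfx p.1 p.2 i := by
      have := hDf_apply p.1 p.2 (Pi.single i 1) 0
      simpa [dotProduct_single] using this
    have e2 : ∀ j, Dg p (Pi.single i 1, 0) j = Jgx p.1 p.2 j i := by
      intro j
      have := hDg_apply p.1 p.2 (Pi.single i 1) 0
      rw [Prod.mk.eta] at this
      rw [this]
      simp [mulVec_single]
    rw [e1]
    simp only [e2]
    simp [mulVec, dotProduct, Matrix.transpose_apply]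
  have hG2eq : (fun p : (Fin nx → ℝ) × (Fin nu → ℝ) =>
        gradfu p.1 p.2 + (Jgu p.1 p.2)ᵀ *ᵥ lam u₀)
      = fun p i => Df p (0, Pi.single i 1) + ∑ j, Dg p (0, Pi.single i 1) j * lam u₀ j := by
    funext p i
    have e1 : Df p (0, Pi.single i 1) = gradfu p.1 p.2 i := by
      have := hDf_apply p.1 p.2 0 (Pi.single i 1)
      simpa [dotProduct_single] using this
    have e2 : ∀ j, Dg p (0, Pi.single i 1) j = Jgu p.1 p.2 j i := by
      intro j
      have := hDg_apply p.1 p.2 0 (Pi.single i 1)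
      rw [Prod.mk.eta] at this
      rw [this]
      simp [mulVec_single]
    rw [e1]
    simp only [e2]
    simp [mulVec, dotProduct, Matrix.transpose_apply]
  have hG1 : Differentiable ℝ (fun p : (Fin nx → ℝ) × (Fin nu → ℝ) =>
      gradfx p.1 p.2 + (Jgx p.1 p.2)ᵀ *ᵥ lam u₀) := by
    rw [hG1eq]
    refine differentiable_pi.mpr fun i => Differentiable.add ?_ ?_
    · exact hDf.clm_apply (differentiable_const _)
    · refine Differentiable.fun_sum fun j _ => Differentiable.mul_const ?_ _
      exact (differentiable_pi.mp (hDg.clm_apply (differentiable_const _))) j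
  have hG2 : Differentiable ℝ (fun p : (Fin nx → ℝ) × (Fin nu → ℝ) =>
      gradfu p.1 p.2 + (Jgu p.1 p.2)ᵀ *ᵥ lam u₀) := by
    rw [hG2eq]
    refine differentiable_pi.mpr fun i => Differentiable.add ?_ ?_
    · exact hDf.clm_apply (differentiable_const _)
    · refine Differentiable.fun_sum fun j _ => Differentiable.mul_const ?_ _
      exact (differentiable_pi.mp (hDg.clm_apply (differentiable_const _))) j
  have hGpair : Differentiable ℝ (fun p : (Fin nx → ℝ) × (Fin nu → ℝ) =>
      (gradfx p.1 p.2 + (Jgx p.1 p.2)ᵀ *ᵥ lam u₀,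
       gradfu p.1 p.2 + (Jgu p.1 p.2)ᵀ *ᵥ lam u₀)) := hG1.prodMk hG2
  set DG := fderiv ℝ (fun p : (Fin nx → ℝ) × (Fin nu → ℝ) =>
      (gradfx p.1 p.2 + (Jgx p.1 p.2)ᵀ *ᵥ lam u₀,
       gradfu p.1 p.2 + (Jgu p.1 p.2)ᵀ *ᵥ lam u₀)) (x u₀, u₀) with hDGdef
  have hDG : HasFDerivAt (fun p : (Fin nx → ℝ) × (Fin nu → ℝ) =>
      (gradfx p.1 p.2 + (Jgx p.1 p.2)ᵀ *ᵥ lam u₀,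
       gradfu p.1 p.2 + (Jgu p.1 p.2)ᵀ *ᵥ lam u₀)) DG (x u₀, u₀) :=
    (hGpair (x u₀, u₀)).hasFDerivAt
  -- identify the blocks of DG
  have hfst_inl : ∀ a : Fin nx → ℝ, (DG ((a, 0) : (Fin nx → ℝ) × (Fin nu → ℝ))).1 = Lxx *ᵥ a := by
    intro a
    have hmid : HasFDerivAt (fun ξ : Fin nx → ℝ =>
        (gradfx ξ u₀ + (Jgx ξ u₀)ᵀ *ᵥ lam u₀, gradfu ξ u₀ + (Jgu ξ u₀)ᵀ *ᵥ lam u₀))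
        (DG.comp (ContinuousLinearMap.inl ℝ (Fin nx → ℝ) (Fin nu → ℝ))) (x u₀) :=
      (hDG.comp (x u₀) (hasFDerivAt_prodMk_left (𝕜 := ℝ) (x u₀) u₀) :)
    have hcomp : HasFDerivAt (fun ξ => gradfx ξ u₀ + (Jgx ξ u₀)ᵀ *ᵥ lam u₀)
        ((ContinuousLinearMap.fst ℝ (Fin nx → ℝ) (Fin nu → ℝ)).comp
          (DG.comp (ContinuousLinearMap.inl ℝ (Fin nx → ℝ) (Fin nu → ℝ)))) (x u₀) :=
      (ContinuousLinearMap.fst ℝ (Fin nx → ℝ) (Fin nu → ℝ)).hasFDerivAt.comp (x u₀) hmid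
    have hu := hcomp.unique hLxx
    have := congrArg (fun L : (Fin nx → ℝ) →L[ℝ] (Fin nx → ℝ) => L a) hu
    simpa [mCLM_apply] using this
  have hfst_inr : ∀ b : Fin nu → ℝ, (DG ((0, b) : (Fin nx → ℝ) × (Fin nu → ℝ))).1 = Lxu *ᵥ b := by
    intro b
    have hmid : HasFDerivAt (fun υ : Fin nu → ℝ =>
        (gradfx (x u₀) υ + (Jgx (x u₀) υ)ᵀ *ᵥ lam u₀, gradfu (x u₀) υ + (Jgu (x u₀) υ)ᵀ *ᵥ lam u₀))
        (DG.comp (ContinuousLinearMap.inr ℝ (Fin nx → ℝ) (Fin nu → ℝ))) u₀ :=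
      hDG.comp u₀ (hasFDerivAt_prodMk_right (x u₀) u₀)
    have hcomp : HasFDerivAt (fun υ => gradfx (x u₀) υ + (Jgx (x u₀) υ)ᵀ *ᵥ lam u₀)
        ((ContinuousLinearMap.fst ℝ (Fin nx → ℝ) (Fin nu → ℝ)).comp
          (DG.comp (ContinuousLinearMap.inr ℝ (Fin nx → ℝ) (Fin nu → ℝ)))) u₀ :=
      (ContinuousLinearMap.fst ℝ (Fin nx → ℝ) (Fin nu → ℝ)).hasFDerivAt.comp u₀ hmid
    have hu := hcomp.unique hLxu
    have := congrArg (fun L : (Fin nu → ℝ) →L[ℝ] (Fin nx → ℝ) => L b) hu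
    simpa [mCLM_apply] using this
  have hsnd_inr : ∀ b : Fin nu → ℝ, (DG ((0, b) : (Fin nx → ℝ) × (Fin nu → ℝ))).2 = Luu *ᵥ b := by
    intro b
    have hmid : HasFDerivAt (fun υ : Fin nu → ℝ =>
        (gradfx (x u₀) υ + (Jgx (x u₀) υ)ᵀ *ᵥ lam u₀, gradfu (x u₀) υ + (Jgu (x u₀) υ)ᵀ *ᵥ lam u₀))
        (DG.comp (ContinuousLinearMap.inr ℝ (Fin nx → ℝ) (Fin nu → ℝ))) u₀ :=
      hDG.comp u₀ (hasFDerivAt_prodMk_right (x u₀) u₀)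
    have hcomp : HasFDerivAt (fun υ => gradfu (x u₀) υ + (Jgu (x u₀) υ)ᵀ *ᵥ lam u₀)
        ((ContinuousLinearMap.snd ℝ (Fin nx → ℝ) (Fin nu → ℝ)).comp
          (DG.comp (ContinuousLinearMap.inr ℝ (Fin nx → ℝ) (Fin nu → ℝ)))) u₀ :=
      (ContinuousLinearMap.snd ℝ (Fin nx → ℝ) (Fin nu → ℝ)).hasFDerivAt.comp u₀ hmid
    have hu := hcomp.unique hLuu
    have := congrArg (fun L : (Fin nu → ℝ) →L[ℝ] (Fin nu → ℝ) => L b) hu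
    simpa [mCLM_apply] using this
  -- symmetry of the second derivative of the Lagrangian gives the remaining block
  have hL' : ∀ p : (Fin nx → ℝ) × (Fin nu → ℝ),
      HasFDerivAt (fun q : (Fin nx → ℝ) × (Fin nu → ℝ) => f q.1 q.2 + lam u₀ ⬝ᵥ g q.1 q.2)
        (pairDotCLM (gradfx p.1 p.2 + (Jgx p.1 p.2)ᵀ *ᵥ lam u₀,
          gradfu p.1 p.2 + (Jgu p.1 p.2)ᵀ *ᵥ lam u₀)) p := by
    rintro ⟨px, pu⟩
    have h1 : HasFDerivAt (fun q : (Fin nx → ℝ) × (Fin nu → ℝ) => f q.1 q.2)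
        (Df (px, pu)) (px, pu) := (hfd (px, pu)).hasFDerivAt
    have h2 : HasFDerivAt (fun q : (Fin nx → ℝ) × (Fin nu → ℝ) => lam u₀ ⬝ᵥ g q.1 q.2)
        ((dCLM (lam u₀)).comp (Dg (px, pu))) (px, pu) :=
      (dCLM (lam u₀)).hasFDerivAt.comp _ (hgd (px, pu)).hasFDerivAt
    have hsum := h1.add h2
    refine hsum.congr_fderiv ?_
    symm
    apply ContinuousLinearMap.ext
    rintro ⟨v1, v2⟩
    rw [pairDotCLM_apply]
    rw [ContinuousLinearMap.add_apply, ContinuousLinearMap.comp_apply, dCLM_apply]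
    rw [hDf_apply, hDg_apply]
    simp only [add_dotProduct, dotProduct_add]
    rw [mulVec_transpose, mulVec_transpose, ← dotProduct_mulVec, ← dotProduct_mulVec]
    ring
  have hsymmFD : HasFDerivAt (fun p : (Fin nx → ℝ) × (Fin nu → ℝ) =>
      pairDotCLM (gradfx p.1 p.2 + (Jgx p.1 p.2)ᵀ *ᵥ lam u₀,
        gradfu p.1 p.2 + (Jgu p.1 p.2)ᵀ *ᵥ lam u₀))
      (pairDotCLM.comp DG) (x u₀, u₀) :=
    pairDotCLM.hasFDerivAt.comp _ hDG
  have hsym := second_derivative_symmetric hL' hsymmFD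
  have hN : ∀ a : Fin nx → ℝ, (DG ((a, 0) : (Fin nx → ℝ) × (Fin nu → ℝ))).2 = Lxuᵀ *ᵥ a := by
    intro a
    funext j
    have hs := hsym ((a, 0) : (Fin nx → ℝ) × (Fin nu → ℝ))
      ((0, Pi.single j 1) : (Fin nx → ℝ) × (Fin nu → ℝ))
    simp only [ContinuousLinearMap.comp_apply, pairDotCLM_apply] at hs
    rw [dotProduct_zero, dotProduct_zero, zero_add, add_zero, dotProduct_single, mul_one,
      hfst_inr] at hs
    rw [hs]
    simp [mulVec, dotProduct, Matrix.transpose_apply, Pi.single_apply, mul_ite,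
      mul_one, mul_zero, Finset.sum_ite_eq']
  -- path derivative at u₀
  have hx1 : DifferentiableAt ℝ x u₀ := hx.differentiableAt two_ne_zero
  set Dx := fderiv ℝ x u₀ with hDxdef
  have hpath : HasFDerivAt (fun u => (x u, u))
      (Dx.prod (ContinuousLinearMap.id ℝ (Fin nu → ℝ))) u₀ :=
    hx1.hasFDerivAt.prodMk (hasFDerivAt_id u₀)
  -- step 1 : Dx w = z
  have hAinj : Function.Injective ((Jgx (x u₀) u₀).mulVec) :=
    Matrix.mulVec_injective_iff_isUnit.mpr ((Matrix.isUnit_iff_isUnit_det _).mpr hinv)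
  have hATinj : Function.Injective (((Jgx (x u₀) u₀)ᵀ).mulVec) :=
    Matrix.mulVec_injective_iff_isUnit.mpr ((Matrix.isUnit_iff_isUnit_det _).mpr
      (by rwa [Matrix.det_transpose]))
  have hg0 : HasFDerivAt (fun u => g (x u) u)
      ((Dg (x u₀, u₀)).comp (Dx.prod (ContinuousLinearMap.id ℝ (Fin nu → ℝ)))) u₀ := by
    have h9 : HasFDerivAt ((fun p : (Fin nx → ℝ) × (Fin nu → ℝ) => g p.1 p.2) ∘ (fun u => (x u, u)))
        ((Dg (x u₀, u₀)).comp (Dx.prod (ContinuousLinearMap.id ℝ (Fin nu → ℝ)))) u₀ :=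
      HasFDerivAt.comp u₀ (hgd (x u₀, u₀)).hasFDerivAt hpath
    exact h9
  have hgz : HasFDerivAt (fun u => g (x u) u) 0 u₀ :=
    (hasFDerivAt_const (𝕜 := ℝ) (0 : Fin nx → ℝ) u₀).congr_of_eventuallyEq (hsol.mono fun u hu => hu)
  have hkey1 := hg0.unique hgz
  have hDxb : ∀ b, Jgx (x u₀) u₀ *ᵥ Dx b = -(Jgu (x u₀) u₀ *ᵥ b) := by
    intro b
    have hb := congrArg (fun L : (Fin nu → ℝ) →L[ℝ] (Fin nx → ℝ) => L b) hkey1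
    simp only [ContinuousLinearMap.comp_apply, ContinuousLinearMap.prod_apply,
      ContinuousLinearMap.coe_id', id, ContinuousLinearMap.zero_apply] at hb
    rw [hDg_apply] at hb
    exact eq_neg_of_add_eq_zero_left hb
  have hDxw : Dx w = z := hAinj (by rw [hDxb w, hz])
  -- step 2 : Dlam w = ψ
  set Dlam := fderiv ℝ lam u₀ with hDlamdef
  have hvsub : HasFDerivAt (fun u => lam u - lam u₀) Dlam u₀ := hlamdiff.hasFDerivAt.sub_const _
  have hJgxT_entry : ∀ (i : Fin nx) (j : Fin nx),
      DifferentiableAt ℝ (fun u => (Jgx (x u) u)ᵀ i j) u₀ := by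
    intro i j
    have heq : (fun u => (Jgx (x u) u)ᵀ i j) = fun u => Dg (x u, u) (Pi.single i 1, 0) j := by
      funext u
      rw [hDg_apply]
      simp [mulVec_single]
    rw [heq]
    have h1 : DifferentiableAt ℝ (fun u => Dg (x u, u)) u₀ := by
      have h9 : DifferentiableAt ℝ (Dg ∘ (fun u => (x u, u))) u₀ :=
        DifferentiableAt.comp u₀ (hDg (x u₀, u₀)) (hx1.prodMk differentiableAt_id)
      exact h9
    exact (differentiableAt_pi.mp (h1.clm_apply (differentiableAt_const _))) j
  have hJguT_entry : ∀ (i : Fin nu) (j : Fin nx),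
      DifferentiableAt ℝ (fun u => (Jgu (x u) u)ᵀ i j) u₀ := by
    intro i j
    have heq : (fun u => (Jgu (x u) u)ᵀ i j) = fun u => Dg (x u, u) (0, Pi.single i 1) j := by
      funext u
      rw [hDg_apply]
      simp [mulVec_single]
    rw [heq]
    have h1 : DifferentiableAt ℝ (fun u => Dg (x u, u)) u₀ := by
      have h9 : DifferentiableAt ℝ (Dg ∘ (fun u => (x u, u))) u₀ :=
        DifferentiableAt.comp u₀ (hDg (x u₀, u₀)) (hx1.prodMk differentiableAt_id)
      exact h9
    exact (differentiableAt_pi.mp (h1.clm_apply (differentiableAt_const _))) j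
  have hc1 : HasFDerivAt (fun u => (Jgx (x u) u)ᵀ *ᵥ (lam u - lam u₀))
      ((mCLM (Jgx (x u₀) u₀)ᵀ).comp Dlam) u₀ :=
    hasFDerivAt_mulVec_vanish hJgxT_entry hvsub (sub_self _)
  have hG1path : HasFDerivAt (fun u => gradfx (x u) u + (Jgx (x u) u)ᵀ *ᵥ lam u₀)
      ((ContinuousLinearMap.fst ℝ (Fin nx → ℝ) (Fin nu → ℝ)).comp
        (DG.comp (Dx.prod (ContinuousLinearMap.id ℝ (Fin nu → ℝ))))) u₀ := by
    have h8 : HasFDerivAt ((fun p : (Fin nx → ℝ) × (Fin nu → ℝ) =>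
        (gradfx p.1 p.2 + (Jgx p.1 p.2)ᵀ *ᵥ lam u₀, gradfu p.1 p.2 + (Jgu p.1 p.2)ᵀ *ᵥ lam u₀))
          ∘ (fun u => (x u, u)))
        (DG.comp (Dx.prod (ContinuousLinearMap.id ℝ (Fin nu → ℝ)))) u₀ :=
      HasFDerivAt.comp u₀ hDG hpath
    have h9 := HasFDerivAt.comp u₀
      (ContinuousLinearMap.fst ℝ (Fin nx → ℝ) (Fin nu → ℝ)).hasFDerivAt h8
    exact h9
  have hχ : HasFDerivAt (fun u => gradfx (x u) u + (Jgx (x u) u)ᵀ *ᵥ lam u)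
      ((ContinuousLinearMap.fst ℝ (Fin nx → ℝ) (Fin nu → ℝ)).comp
        (DG.comp (Dx.prod (ContinuousLinearMap.id ℝ (Fin nu → ℝ))))
        + (mCLM (Jgx (x u₀) u₀)ᵀ).comp Dlam) u₀ := by
    have hsum := hG1path.add hc1
    apply hsum.congr_of_eventuallyEq
    filter_upwards with u
    simp only [Pi.add_apply]
    rw [Matrix.mulVec_sub]
    abel
  have hχ0 : HasFDerivAt (fun u => gradfx (x u) u + (Jgx (x u) u)ᵀ *ᵥ lam u) 0 u₀ :=
    (hasFDerivAt_const (𝕜 := ℝ) (0 : Fin nx → ℝ) u₀).congr_of_eventuallyEq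
      (hlam.mono fun u hu => by simp [hu])
  have hkey2 := hχ.unique hχ0
  have hDlamw : Dlam w = ψ := by
    apply hATinj
    have hw := congrArg (fun L : (Fin nu → ℝ) →L[ℝ] (Fin nx → ℝ) => L w) hkey2
    simp only [ContinuousLinearMap.add_apply, ContinuousLinearMap.comp_apply,
      ContinuousLinearMap.prod_apply, ContinuousLinearMap.coe_id', id,
      ContinuousLinearMap.zero_apply, mCLM_apply, ContinuousLinearMap.coe_fst'] at hw
    have hsplit : (DG ((Dx w, w) : (Fin nx → ℝ) × (Fin nu → ℝ))).1 = Lxx *ᵥ z + Lxu *ᵥ w := by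
      have hd : ((Dx w, w) : (Fin nx → ℝ) × (Fin nu → ℝ))
          = ((Dx w, 0) : (Fin nx → ℝ) × (Fin nu → ℝ))
            + ((0, w) : (Fin nx → ℝ) × (Fin nu → ℝ)) := by simp
      rw [hd, map_add, Prod.fst_add, hfst_inl, hfst_inr, hDxw]
    rw [hsplit] at hw
    have hc := eq_neg_of_add_eq_zero_right hw
    show (Jgx (x u₀) u₀)ᵀ *ᵥ Dlam w = (Jgx (x u₀) u₀)ᵀ *ᵥ ψ
    rw [hψ, hc]
    abel
  -- step 3 : eventual formula for gradF
  have hgradFeq : ∀ᶠ u in nhds u₀,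
      gradF u = gradfu (x u) u + (Jgu (x u) u)ᵀ *ᵥ lam u := by
    filter_upwards [hgradF, hsol.eventually_nhds, hlam, hx.eventually (by simp)]
      with u hgF hsolu hlamu hxu
    have hxud : DifferentiableAt ℝ x u := hxu.differentiableAt two_ne_zero
    have hpathu : HasFDerivAt (fun u' => (x u', u'))
        ((fderiv ℝ x u).prod (ContinuousLinearMap.id ℝ (Fin nu → ℝ))) u :=
      hxud.hasFDerivAt.prodMk (hasFDerivAt_id u)
    have hgu1 : HasFDerivAt (fun u' => g (x u') u')
        ((Dg (x u, u)).comp ((fderiv ℝ x u).prod (ContinuousLinearMap.id ℝ (Fin nu → ℝ)))) u := by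
      have h9 : HasFDerivAt ((fun p : (Fin nx → ℝ) × (Fin nu → ℝ) => g p.1 p.2) ∘ (fun u' => (x u', u')))
          ((Dg (x u, u)).comp ((fderiv ℝ x u).prod (ContinuousLinearMap.id ℝ (Fin nu → ℝ)))) u :=
        HasFDerivAt.comp u (hgd (x u, u)).hasFDerivAt hpathu
      exact h9
    have hgu0 : HasFDerivAt (fun u' => g (x u') u') 0 u :=
      (hasFDerivAt_const (𝕜 := ℝ) (0 : Fin nx → ℝ) u).congr_of_eventuallyEq (hsolu.mono fun _ h => h)
    have hkey := hgu1.unique hgu0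
    have hJD : ∀ b, Jgx (x u) u *ᵥ (fderiv ℝ x u b) = -(Jgu (x u) u *ᵥ b) := by
      intro b
      have hb := congrArg (fun L : (Fin nu → ℝ) →L[ℝ] (Fin nx → ℝ) => L b) hkey
      simp only [ContinuousLinearMap.comp_apply, ContinuousLinearMap.prod_apply,
        ContinuousLinearMap.coe_id', id, ContinuousLinearMap.zero_apply] at hb
      rw [hDg_apply] at hb
      exact eq_neg_of_add_eq_zero_left hb
    have hFu : HasFDerivAt (fun u' => f (x u') u')
        ((Df (x u, u)).comp ((fderiv ℝ x u).prod (ContinuousLinearMap.id ℝ (Fin nu → ℝ)))) u := by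
      have h9 : HasFDerivAt ((fun p : (Fin nx → ℝ) × (Fin nu → ℝ) => f p.1 p.2) ∘ (fun u' => (x u', u')))
          ((Df (x u, u)).comp ((fderiv ℝ x u).prod (ContinuousLinearMap.id ℝ (Fin nu → ℝ)))) u :=
        HasFDerivAt.comp u (hfd (x u, u)).hasFDerivAt hpathu
      exact h9
    have hkeyF := hgF.unique hFu
    funext j
    have hj := congrArg (fun L : (Fin nu → ℝ) →L[ℝ] ℝ => L (Pi.single j 1)) hkeyF
    simp only [ContinuousLinearMap.comp_apply, ContinuousLinearMap.prod_apply,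
      ContinuousLinearMap.coe_id', id] at hj
    rw [dCLM_single, hDf_apply] at hj
    have hgxeq : gradfx (x u) u = -((Jgx (x u) u)ᵀ *ᵥ lam u) := by rw [hlamu, neg_neg]
    rw [hgxeq, neg_dotProduct, mulVec_transpose, ← dotProduct_mulVec, hJD, dotProduct_neg,
      neg_neg, dotProduct_mulVec, ← mulVec_transpose, dotProduct_single, dotProduct_single,
      mul_one, mul_one] at hj
    rw [hj, Pi.add_apply]
    exact add_comm _ _
  -- step 4 : conclusion
  have hc2 : HasFDerivAt (fun u => (Jgu (x u) u)ᵀ *ᵥ (lam u - lam u₀))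
      ((mCLM (Jgu (x u₀) u₀)ᵀ).comp Dlam) u₀ :=
    hasFDerivAt_mulVec_vanish hJguT_entry hvsub (sub_self _)
  have hG2path : HasFDerivAt (fun u => gradfu (x u) u + (Jgu (x u) u)ᵀ *ᵥ lam u₀)
      ((ContinuousLinearMap.snd ℝ (Fin nx → ℝ) (Fin nu → ℝ)).comp
        (DG.comp (Dx.prod (ContinuousLinearMap.id ℝ (Fin nu → ℝ))))) u₀ := by
    have h8 : HasFDerivAt ((fun p : (Fin nx → ℝ) × (Fin nu → ℝ) =>
        (gradfx p.1 p.2 + (Jgx p.1 p.2)ᵀ *ᵥ lam u₀, gradfu p.1 p.2 + (Jgu p.1 p.2)ᵀ *ᵥ lam u₀))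
          ∘ (fun u => (x u, u)))
        (DG.comp (Dx.prod (ContinuousLinearMap.id ℝ (Fin nu → ℝ)))) u₀ :=
      HasFDerivAt.comp u₀ hDG hpath
    have h9 := HasFDerivAt.comp u₀
      (ContinuousLinearMap.snd ℝ (Fin nx → ℝ) (Fin nu → ℝ)).hasFDerivAt h8
    exact h9
  have hφ : HasFDerivAt (fun u => gradfu (x u) u + (Jgu (x u) u)ᵀ *ᵥ lam u)
      ((ContinuousLinearMap.snd ℝ (Fin nx → ℝ) (Fin nu → ℝ)).comp
        (DG.comp (Dx.prod (ContinuousLinearMap.id ℝ (Fin nu → ℝ))))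
        + (mCLM (Jgu (x u₀) u₀)ᵀ).comp Dlam) u₀ := by
    have hsum := hG2path.add hc2
    apply hsum.congr_of_eventuallyEq
    filter_upwards with u
    simp only [Pi.add_apply]
    rw [Matrix.mulVec_sub]
    abel
  have hφH : HasFDerivAt (fun u => gradfu (x u) u + (Jgu (x u) u)ᵀ *ᵥ lam u)
      (mCLM HessF) u₀ :=
    hHessF.congr_of_eventuallyEq (hgradFeq.mono fun u hu => hu.symm)
  have hkey4 := hφH.unique hφ
  have hw := congrArg (fun L : (Fin nu → ℝ) →L[ℝ] (Fin nu → ℝ) => L w) hkey4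
  simp only [ContinuousLinearMap.add_apply, ContinuousLinearMap.comp_apply,
    ContinuousLinearMap.prod_apply, ContinuousLinearMap.coe_id', id,
    mCLM_apply, ContinuousLinearMap.coe_snd'] at hw
  have hsplit : (DG ((Dx w, w) : (Fin nx → ℝ) × (Fin nu → ℝ))).2 = Lxuᵀ *ᵥ z + Luu *ᵥ w := by
    have hd : ((Dx w, w) : (Fin nx → ℝ) × (Fin nu → ℝ))
        = ((Dx w, 0) : (Fin nx → ℝ) × (Fin nu → ℝ))
          + ((0, w) : (Fin nx → ℝ) × (Fin nu → ℝ)) := by simp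
    rw [hd, map_add, Prod.snd_add, hN, hsnd_inr, hDxw]
  rw [hsplit, hDlamw] at hw
  rw [hw]
  abel
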